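/- Let (T, s) be a 2-coloured (signed) triangulation of a convex polygon with associated proper 4-colouring of the vertices, and let x be a vertex of the polygon. If the only two neighbours of x with equal colour are its two neighbours along the polygon boundary, then x has degree 3 or 4 in T and the weight p(x) (sum mod 3 of the signs of triangles at x) equals 0. -/

import Mathlib

namespace PolyFlip


/-- Two vertices of the convex `N`-gon are consecutive along the boundary. -/
def BdryAdj (N : ℕ) (i j : Fin N) : Prop :=
  (i.val + 1) % N = j.val ∨ (j.val + 1) % N = i.val

/-- `d` is a diagonal of the convex `N`-gon: an unordered pair of distinct,
non-consecutive vertices. -/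
def IsDiag (N : ℕ) (d : Finset (Fin N)) : Prop :=
  ∃ i j : Fin N, i ≠ j ∧ ¬ BdryAdj N i j ∧ d = {i, j}

/-- The chord `d` crosses the chord `e` (in this orientation): the endpoints
interlace in the cyclic (here: linear) order of the polygon's vertices. -/
def Crosses {N : ℕ} (d e : Finset (Fin N)) : Prop :=
  ∃ a b c f : Fin N, d = {a, b} ∧ e = {c, f} ∧ a < c ∧ c < b ∧ b < f

/-- A triangulation of the convex `N`-gon: a maximal set of pairwise
non-crossing diagonals. -/
structure Triangulation (N : ℕ) where
  diags : Finset (Finset (Fin N))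
  isDiag : ∀ d ∈ diags, IsDiag N d
  noncross : ∀ d ∈ diags, ∀ e ∈ diags, ¬ Crosses d e
  maximal : ∀ d, IsDiag N d → (∀ e ∈ diags, ¬ Crosses d e ∧ ¬ Crosses e d) → d ∈ diags

/-- `a` and `b` are joined by an edge of the triangulated polygon:
either a boundary edge, or a diagonal of the triangulation. -/
def IsEdge {N : ℕ} (T : Triangulation N) (a b : Fin N) : Prop :=
  a ≠ b ∧ (BdryAdj N a b ∨ ({a, b} : Finset (Fin N)) ∈ T.diags)

/-- `t` is a triangle (face) of the triangulation `T`. -/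
def IsTriangle {N : ℕ} (T : Triangulation N) (t : Finset (Fin N)) : Prop :=
  ∃ a b c : Fin N, a ≠ b ∧ a ≠ c ∧ b ≠ c ∧ t = {a, b, c} ∧
    IsEdge T a b ∧ IsEdge T a c ∧ IsEdge T b c

/-- A coloured triangulation: a triangulation together with a colour in
`Fin m` for each of its triangles. -/
structure ColouredTri (N m : ℕ) where
  T : Triangulation N
  col : {t : Finset (Fin N) // IsTriangle T t} → Fin m

/-- The degree of a vertex `x` in the triangulated polygon. -/
noncomputable def degree {N : ℕ} (T : Triangulation N) (x : Fin N) : ℕ :=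
  Nat.card {y : Fin N // IsEdge T x y}

/-- The `σ`-flip at the diagonal `d`: `d = {a,b}` is a diagonal of `C` whose two
incident triangles `{a,b,x}` and `{a,b,y}` have the same colour `i`; it is replaced by
the other diagonal `{x,y}` of the quadrilateral, the two new triangles `{a,x,y}` and
`{b,x,y}` get colour `σ i`, and all other triangles keep their colours. -/
def SFlipAt {N m : ℕ} (σ : Equiv.Perm (Fin m)) (d : Finset (Fin N))
    (C C' : ColouredTri N m) : Prop :=
  ∃ (a b x y : Fin N) (h₁ : IsTriangle C.T {a, b, x}) (h₂ : IsTriangle C.T {a, b, y})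
    (h₁' : IsTriangle C'.T {a, x, y}) (h₂' : IsTriangle C'.T {b, x, y}),
    d = {a, b} ∧ d ∈ C.T.diags ∧ x ≠ y ∧
    C.col ⟨{a, b, x}, h₁⟩ = C.col ⟨{a, b, y}, h₂⟩ ∧
    C'.T.diags = insert {x, y} (C.T.diags.erase d) ∧
    C'.col ⟨{a, x, y}, h₁'⟩ = σ (C.col ⟨{a, b, x}, h₁⟩) ∧
    C'.col ⟨{b, x, y}, h₂'⟩ = σ (C.col ⟨{a, b, x}, h₁⟩) ∧
    ∀ (t : Finset (Fin N)) (ht : IsTriangle C.T t) (ht' : IsTriangle C'.T t),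
      t ≠ {a, b, x} → t ≠ {a, b, y} → C'.col ⟨t, ht'⟩ = C.col ⟨t, ht⟩

/-- The `σ`-flip relation. -/
def SFlip {N m : ℕ} (σ : Equiv.Perm (Fin m)) (C C' : ColouredTri N m) : Prop :=
  ∃ d, SFlipAt σ d C C'

/-- The 2-coloured flip at a diagonal (the colour permutation swaps the two colours). -/
abbrev Flip2At {N : ℕ} (d : Finset (Fin N)) (C C' : ColouredTri N 2) : Prop :=
  SFlipAt (finRotate 2) d C C'

/-- The 2-coloured flip relation. -/
abbrev Flip2 {N : ℕ} (C C' : ColouredTri N 2) : Prop :=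
  SFlip (finRotate 2) C C'

/-- The 2-coloured flip graph of the convex `N`-gon: vertices are the 2-coloured
triangulations, edges are single 2-coloured flips. -/
def flipGraph (N : ℕ) : SimpleGraph (ColouredTri N 2) where
  Adj C C' := C ≠ C' ∧ (Flip2 C C' ∨ Flip2 C' C)
  symm := ⟨fun C C' h => ⟨h.1.symm, h.2.symm⟩⟩
  loopless := ⟨fun C h => h.1 rfl⟩

/-- The sign (`+1` for colour `0`, `-1` for colour `1`) of a colour, in `ZMod 3`. -/
def signVal (c : Fin 2) : ZMod 3 := if c = 0 then 1 else -1

/-- The weight of a vertex `x`: the sum, modulo 3, of the signs of all triangles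
incident with `x`. -/
noncomputable def weight {N : ℕ} (C : ColouredTri N 2) (x : Fin N) : ZMod 3 :=
  ∑ᶠ t : {t : Finset (Fin N) // IsTriangle C.T t},
    if x ∈ t.val then signVal (C.col t) else 0

/-- The number of triangles coloured `+1` (colour `0`). -/
noncomputable def plusCount {N : ℕ} (C : ColouredTri N 2) : ℕ :=
  Nat.card {t : {t : Finset (Fin N) // IsTriangle C.T t} // C.col t = 0}

/-- Adjacency in the `k`-dimensional hypercube: the two vertices differ in
exactly one coordinate. -/
def cubeAdj (k : ℕ) (u v : Fin k → Bool) : Prop := ∃! i, u i ≠ v i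

/-- The `k`-dimensional hypercube graph on `{0,1}^k`. -/
def cubeGraph (k : ℕ) : SimpleGraph (Fin k → Bool) where
  Adj := cubeAdj k
  symm := by
    constructor
    rintro u v ⟨i, hi, hu⟩
    exact ⟨i, hi.symm, fun j hj => hu j hj.symm⟩
  loopless := by
    constructor
    rintro u ⟨i, hi, -⟩
    exact hi rfl

/-- `f` exhibits a `k`-dimensional hypercube inside the connected component of `C`
in the 2-coloured flip graph. -/
def CubeEmb {N : ℕ} (C : ColouredTri N 2) (k : ℕ)
    (f : (Fin k → Bool) → ColouredTri N 2) : Prop :=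
  Function.Injective f ∧
  (∀ u v, cubeAdj k u v → (flipGraph N).Adj (f u) (f v)) ∧
  ∀ u, (flipGraph N).Reachable C (f u)

/-- `G` contains a subdivision (topological copy) of `H`: there are branch vertices
`f w` for the vertices `w` of `H` and internally disjoint paths in `G` between them
realising the edges of `H`. -/
def ContainsSubdivision {V W : Type*} (G : SimpleGraph V) (H : SimpleGraph W) : Prop :=
  ∃ f : W → V, Function.Injective f ∧
    ∃ P : ∀ u v : W, H.Adj u v → G.Walk (f u) (f v),
      (∀ u v (h : H.Adj u v), (P u v h).IsPath) ∧
      (∀ u v (h : H.Adj u v) (w : W), f w ∈ (P u v h).support → w = u ∨ w = v) ∧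
      (∀ u₁ v₁ (h₁ : H.Adj u₁ v₁) u₂ v₂ (h₂ : H.Adj u₂ v₂),
        (s(u₁, v₁) : Sym2 W) ≠ s(u₂, v₂) →
        ∀ x, x ∈ (P u₁ v₁ h₁).support → x ∈ (P u₂ v₂ h₂).support →
          (x = f u₁ ∨ x = f v₁) ∧ (x = f u₂ ∨ x = f v₂))

/-- Planarity, via Kuratowski's characterisation: a graph is planar iff it contains
no subdivision of `K₅` and no subdivision of `K₃,₃`. -/
def IsPlanar {V : Type*} (G : SimpleGraph V) : Prop :=
  ¬ ContainsSubdivision G (SimpleGraph.completeGraph (Fin 5)) ∧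
  ¬ ContainsSubdivision G (completeBipartiteGraph (Fin 3) (Fin 3))

/-- `col` is a proper 4-colouring of the vertices associated to the signed
triangulation `C`: adjacent vertices get distinct colours, and in every
quadrilateral formed by two triangles sharing a diagonal, the two vertices not on
the diagonal have equal colours iff the two triangles have different signs. -/
def Compatible {N : ℕ} (C : ColouredTri N 2) (col : Fin N → Fin 4) : Prop :=
  (∀ a b : Fin N, IsEdge C.T a b → col a ≠ col b) ∧
  ∀ (a b x z : Fin N) (h₁ : IsTriangle C.T {a, b, x}) (h₂ : IsTriangle C.T {a, b, z}),
    x ≠ z → ({a, b} : Finset (Fin N)) ∈ C.T.diags →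
    (col x = col z ↔ C.col ⟨{a, b, x}, h₁⟩ ≠ C.col ⟨{a, b, z}, h₂⟩)

section Machinery

variable {n : ℕ}

lemma pair_eq_iff {α : Type*} [DecidableEq α] {a b c d : α} :
    ({a, b} : Finset α) = {c, d} ↔ (a = c ∧ b = d) ∨ (a = d ∧ b = c) := by
  rw [← Finset.coe_inj]
  push_cast
  exact Set.pair_eq_pair_iff

lemma pair_eq_of_lt {a b c d : Fin (n+3)} (h : ({a, b} : Finset (Fin (n+3))) = {c, d})
    (hab : a < b) (hcd : c < d) : a = c ∧ b = d := by
  rcases pair_eq_iff.1 h with ⟨rfl, rfl⟩ | ⟨rfl, rfl⟩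
  · exact ⟨rfl, rfl⟩
  · exact absurd (hab.trans hcd) (lt_irrefl _)

lemma crosses_elim_left {u v : Fin (n+3)} (huv : u < v) {e : Finset (Fin (n+3))}
    (h : Crosses ({u, v} : Finset (Fin (n+3))) e) :
    ∃ p q, e = {p, q} ∧ u < p ∧ p < v ∧ v < q := by
  obtain ⟨a, b, c, f, hd, he, o1, o2, o3⟩ := h
  obtain ⟨rfl, rfl⟩ := pair_eq_of_lt hd.symm (o1.trans o2) huv
  exact ⟨c, f, he, o1, o2, o3⟩

lemma crosses_elim_right {u v : Fin (n+3)} (huv : u < v) {e : Finset (Fin (n+3))}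
    (h : Crosses e ({u, v} : Finset (Fin (n+3)))) :
    ∃ p q, e = {p, q} ∧ p < u ∧ u < q ∧ q < v := by
  obtain ⟨a, b, c, f, hd, he, o1, o2, o3⟩ := h
  obtain ⟨rfl, rfl⟩ := pair_eq_of_lt he.symm (o2.trans o3) huv
  exact ⟨a, b, hd, o1, o2, o3⟩

lemma bdryAdj_iff {i j : Fin (n+3)} : BdryAdj (n+3) i j ↔ j = i + 1 ∨ i = j + 1 := by
  simp only [BdryAdj, Fin.ext_iff, Fin.val_add, Fin.val_one]
  omega

lemma bdryAdj_lt {i j : Fin (n+3)} (hij : i < j) (h : BdryAdj (n+3) i j) :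
    j.val = i.val + 1 ∨ (i.val = 0 ∧ j.val = n + 2) := by
  have hi := i.isLt
  have hj := j.isLt
  have hij' : i.val < j.val := hij
  rcases h with h | h
  · rcases Nat.lt_or_ge (i.val + 1) (n+3) with h' | h'
    · rw [Nat.mod_eq_of_lt h'] at h; omega
    · have : i.val + 1 = n + 3 := by omega
      rw [this, Nat.mod_self] at h; omega
  · rcases Nat.lt_or_ge (j.val + 1) (n+3) with h' | h'
    · rw [Nat.mod_eq_of_lt h'] at h; omega
    · have : j.val + 1 = n + 3 := by omega
      rw [this, Nat.mod_self] at h; omega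

lemma isEdge_symm {T : Triangulation (n+3)} {a b : Fin (n+3)} (h : IsEdge T a b) :
    IsEdge T b a := by
  refine ⟨h.1.symm, ?_⟩
  rcases h.2 with h' | h'
  · exact Or.inl h'.symm
  · rw [Finset.pair_comm]; exact Or.inr h'

lemma edge_of_pair {T : Triangulation (n+3)} {u v a b : Fin (n+3)} (h : IsEdge T u v)
    (hp : ({u, v} : Finset (Fin (n+3))) = {a, b}) : IsEdge T a b := by
  rcases pair_eq_iff.1 hp with ⟨rfl, rfl⟩ | ⟨rfl, rfl⟩
  · exact h
  · exact isEdge_symm h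

lemma not_cross_edge {T : Triangulation (n+3)} {u v p q : Fin (n+3)}
    (h1 : IsEdge T u v) (h2 : IsEdge T p q) :
    ¬ Crosses ({u, v} : Finset (Fin (n+3))) {p, q} := by
  rintro ⟨a, b, c, f, hd, he, o1, o2, o3⟩
  have hab : a < b := o1.trans o2
  have hcf : c < f := o2.trans o3
  have e1 : IsEdge T a b := edge_of_pair h1 hd
  have e2 : IsEdge T c f := edge_of_pair h2 he
  have o1' : a.val < c.val := o1
  have o2' : c.val < b.val := o2
  have o3' : b.val < f.val := o3
  have hfl := f.isLt
  rcases e1.2 with hb1 | hm1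
  · rcases bdryAdj_lt hab hb1 with h' | ⟨h0, h'⟩ <;> omega
  · rcases e2.2 with hb2 | hm2
    · rcases bdryAdj_lt hcf hb2 with h' | ⟨h0, h'⟩ <;> omega
    · exact T.noncross _ hm1 _ hm2 ⟨a, b, c, f, rfl, rfl, o1, o2, o3⟩

lemma exists_cross {T : Triangulation (n+3)} {d : Finset (Fin (n+3))}
    (hd : IsDiag (n+3) d) (hnd : d ∉ T.diags) :
    ∃ e ∈ T.diags, Crosses d e ∨ Crosses e d := by
  by_contra h
  push_neg at h
  exact hnd (T.maximal d hd fun e he => ⟨(h e he).1, (h e he).2⟩)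

lemma fan {T : Triangulation (n+3)} {u v : Fin (n+3)} (huv : IsEdge T u v)
    (h : u.val + 1 < v.val) :
    ∃ c, u < c ∧ c < v ∧ IsEdge T u c ∧ IsEdge T c v := by
  classical
  set F := Finset.univ.filter (fun c : Fin (n+3) => u < c ∧ c < v ∧ IsEdge T u c) with hF
  have hvlt := v.isLt
  have hne : F.Nonempty := by
    refine ⟨⟨u.val + 1, by omega⟩, ?_⟩
    simp only [hF, Finset.mem_filter, Finset.mem_univ, true_and]
    refine ⟨by simp only [Fin.lt_def]; omega, by simp only [Fin.lt_def]; omega, ?_⟩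
    refine ⟨by simp only [Ne, Fin.ext_iff]; omega, Or.inl (Or.inl ?_)⟩
    show (u.val + 1) % (n+3) = u.val + 1
    exact Nat.mod_eq_of_lt (by omega)
  set c := F.max' hne with hcdef
  have hc := F.max'_mem hne
  simp only [hF, Finset.mem_filter, Finset.mem_univ, true_and] at hc
  obtain ⟨huc, hcv, hec⟩ := hc
  refine ⟨c, huc, hcv, hec, ?_⟩
  by_contra hnedge
  have hcvne : c ≠ v := ne_of_lt hcv
  have hnb : ¬ BdryAdj (n+3) c v := fun hb => hnedge ⟨hcvne, Or.inl hb⟩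
  have hnm : ({c, v} : Finset (Fin (n+3))) ∉ T.diags := fun hm => hnedge ⟨hcvne, Or.inr hm⟩
  obtain ⟨e, he, hcr⟩ := exists_cross ⟨c, v, hcvne, hnb, rfl⟩ hnm
  rcases hcr with hcr | hcr
  · obtain ⟨p, q, rfl, h1, h2, h3⟩ := crosses_elim_left hcv hcr
    have hpq : IsEdge T p q := ⟨ne_of_lt (h2.trans h3), Or.inr he⟩
    exact not_cross_edge huv hpq ⟨u, v, p, q, rfl, rfl, huc.trans h1, h2, h3⟩
  · obtain ⟨p, q, rfl, h1, h2, h3⟩ := crosses_elim_right hcv hcr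
    have hpq : IsEdge T p q := ⟨ne_of_lt ((h1.trans h2)), Or.inr he⟩
    rcases lt_trichotomy p u with hpu | rfl | hup
    · exact not_cross_edge hpq huv ⟨p, q, u, v, rfl, rfl, hpu, huc.trans h2, h3⟩
    · have hq : q ∈ F := by
        simp only [hF, Finset.mem_filter, Finset.mem_univ, true_and]
        exact ⟨huc.trans h2, h3, hpq⟩
      exact absurd (F.le_max' q hq) (not_le.2 h2)
    · exact not_cross_edge hec hpq ⟨u, c, p, q, rfl, rfl, hup, h1, h2⟩

end Machinery

section Rotation

variable {n : ℕ}

def rotF (d : Finset (Fin (n+3))) : Finset (Fin (n+3)) := d.image (· + 1)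

def unrotF (d : Finset (Fin (n+3))) : Finset (Fin (n+3)) := d.image (· - 1)

lemma rotF_unrotF (d : Finset (Fin (n+3))) : rotF (unrotF d) = d := by
  simp only [rotF, unrotF, Finset.image_image]
  have : ((· + 1) ∘ (· - 1) : Fin (n+3) → Fin (n+3)) = id := by
    funext x; simp
  rw [this, Finset.image_id]

lemma unrotF_rotF (d : Finset (Fin (n+3))) : unrotF (rotF d) = d := by
  simp only [rotF, unrotF, Finset.image_image]
  have : ((· - 1) ∘ (· + 1) : Fin (n+3) → Fin (n+3)) = id := by
    funext x; simp
  rw [this, Finset.image_id]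

lemma rotF_pair (a b : Fin (n+3)) : rotF ({a, b} : Finset (Fin (n+3))) = {a + 1, b + 1} := by
  simp [rotF, Finset.image_insert]

lemma unrotF_pair (a b : Fin (n+3)) : unrotF ({a, b} : Finset (Fin (n+3))) = {a - 1, b - 1} := by
  simp [unrotF, Finset.image_insert]

lemma rotF_triple (a b c : Fin (n+3)) :
    rotF ({a, b, c} : Finset (Fin (n+3))) = {a + 1, b + 1, c + 1} := by
  simp [rotF, Finset.image_insert]

lemma unrotF_triple (a b c : Fin (n+3)) :
    unrotF ({a, b, c} : Finset (Fin (n+3))) = {a - 1, b - 1, c - 1} := by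
  simp [unrotF, Finset.image_insert]

lemma mem_rotF {x : Fin (n+3)} {t : Finset (Fin (n+3))} : x + 1 ∈ rotF t ↔ x ∈ t := by
  simp [rotF]

lemma val_add_one_of_lt {a : Fin (n+3)} (h : a.val < n + 2) : (a + 1).val = a.val + 1 := by
  rw [Fin.val_add, Fin.val_one, Nat.mod_eq_of_lt (by omega)]

lemma val_add_one_top {a : Fin (n+3)} (h : a.val = n + 2) : (a + 1).val = 0 := by
  rw [Fin.val_add, Fin.val_one, h]
  simp

lemma crossSym_rotF {d e : Finset (Fin (n+3))} (h : Crosses d e) :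
    Crosses (rotF d) (rotF e) ∨ Crosses (rotF e) (rotF d) := by
  obtain ⟨a, b, c, f, rfl, rfl, o1, o2, o3⟩ := h
  rw [rotF_pair, rotF_pair]
  have o1' : a.val < c.val := o1
  have o2' : c.val < b.val := o2
  have o3' : b.val < f.val := o3
  have hfl := f.isLt
  by_cases hf : f.val = n + 2
  · right
    refine ⟨f + 1, c + 1, a + 1, b + 1, Finset.pair_comm _ _, rfl, ?_, ?_, ?_⟩ <;>
      rw [Fin.lt_def]
    · rw [val_add_one_top hf, val_add_one_of_lt (by omega)]; omega
    · rw [val_add_one_of_lt (by omega), val_add_one_of_lt (by omega)]; omega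
    · rw [val_add_one_of_lt (by omega), val_add_one_of_lt (by omega)]; omega
  · left
    refine ⟨a + 1, b + 1, c + 1, f + 1, rfl, rfl, ?_, ?_, ?_⟩ <;> rw [Fin.lt_def] <;>
      rw [val_add_one_of_lt (by omega), val_add_one_of_lt (by omega)] <;> omega

open Fin.NatCast in
lemma rotF_iterate (k : ℕ) (d : Finset (Fin (n+3))) :
    rotF^[k] d = d.image (· + (k : Fin (n+3))) := by
  induction k with
  | zero => simp
  | succ k ih =>
    rw [Function.iterate_succ_apply', ih]
    simp only [rotF, Finset.image_image]
    congr 1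
    funext x
    simp only [Function.comp_apply]
    rw [Nat.cast_add, Nat.cast_one, add_assoc]

open Fin.NatCast in
lemma rotF_iterate_id (d : Finset (Fin (n+3))) : rotF^[n+3] d = d := by
  rw [rotF_iterate]
  have : ((n + 3 : ℕ) : Fin (n+3)) = 0 := by
    exact_mod_cast Fin.natCast_self (n+3)
  rw [this]
  simp

lemma crossSym_rotF_iter (k : ℕ) {d e : Finset (Fin (n+3))}
    (h : Crosses d e ∨ Crosses e d) :
    Crosses (rotF^[k] d) (rotF^[k] e) ∨ Crosses (rotF^[k] e) (rotF^[k] d) := by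
  induction k with
  | zero => exact h
  | succ k ih =>
    rw [Function.iterate_succ_apply', Function.iterate_succ_apply']
    rcases ih with h' | h'
    · exact crossSym_rotF h'
    · exact (crossSym_rotF h').symm

lemma crossSym_rotF_iff {d e : Finset (Fin (n+3))} :
    (Crosses (rotF d) (rotF e) ∨ Crosses (rotF e) (rotF d)) ↔
      (Crosses d e ∨ Crosses e d) := by
  constructor
  · intro h
    have h2 := crossSym_rotF_iter (n+2) h
    rw [← Function.iterate_succ_apply, ← Function.iterate_succ_apply] at h2
    rwa [rotF_iterate_id, rotF_iterate_id] at h2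
  · rintro (h | h)
    · exact crossSym_rotF h
    · exact (crossSym_rotF h).symm

lemma bdryAdj_rot {i j : Fin (n+3)} :
    BdryAdj (n+3) (i + 1) (j + 1) ↔ BdryAdj (n+3) i j := by
  rw [bdryAdj_iff, bdryAdj_iff]
  constructor <;> rintro (h | h)
  · left; rwa [add_right_comm, add_left_inj] at h
  · right; rwa [add_right_comm, add_left_inj] at h
  · left; rw [h, add_right_comm]
  · right; rw [h, add_right_comm]

lemma isDiag_rot {d : Finset (Fin (n+3))} (h : IsDiag (n+3) d) : IsDiag (n+3) (rotF d) := by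
  obtain ⟨i, j, hne, hnb, rfl⟩ := h
  exact ⟨i + 1, j + 1, by simpa using hne, fun hb => hnb (bdryAdj_rot.1 hb), rotF_pair i j⟩

lemma isDiag_unrot {d : Finset (Fin (n+3))} (h : IsDiag (n+3) d) : IsDiag (n+3) (unrotF d) := by
  obtain ⟨i, j, hne, hnb, rfl⟩ := h
  refine ⟨i - 1, j - 1, by simpa using hne, fun hb => hnb ?_, unrotF_pair i j⟩
  have h2 := bdryAdj_rot.2 hb
  simpa using h2

def rotT (T : Triangulation (n+3)) : Triangulation (n+3) where
  diags := T.diags.image rotF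
  isDiag := by
    intro d hd
    obtain ⟨e, he, rfl⟩ := Finset.mem_image.1 hd
    exact isDiag_rot (T.isDiag e he)
  noncross := by
    intro d hd e he hc
    obtain ⟨d0, hd0, rfl⟩ := Finset.mem_image.1 hd
    obtain ⟨e0, he0, rfl⟩ := Finset.mem_image.1 he
    rcases crossSym_rotF_iff.1 (Or.inl hc) with h | h
    · exact T.noncross _ hd0 _ he0 h
    · exact T.noncross _ he0 _ hd0 h
  maximal := by
    intro d hd hcr
    have key : ∀ e ∈ T.diags, ¬ Crosses (unrotF d) e ∧ ¬ Crosses e (unrotF d) := by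
      intro e he
      have key' : ¬ (Crosses (unrotF d) e ∨ Crosses e (unrotF d)) := by
        intro hc
        have h2 := (crossSym_rotF_iff (d := unrotF d) (e := e)).2 hc
        rw [rotF_unrotF] at h2
        have hmem : rotF e ∈ T.diags.image rotF := Finset.mem_image_of_mem _ he
        rcases h2 with h | h
        · exact (hcr _ hmem).1 h
        · exact (hcr _ hmem).2 h
      exact ⟨fun h => key' (Or.inl h), fun h => key' (Or.inr h)⟩
    have : unrotF d ∈ T.diags := T.maximal _ (isDiag_unrot hd) key
    exact Finset.mem_image.2 ⟨_, this, rotF_unrotF d⟩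

lemma mem_rot_diags {T : Triangulation (n+3)} {a b : Fin (n+3)} :
    ({a + 1, b + 1} : Finset (Fin (n+3))) ∈ (rotT T).diags ↔
      ({a, b} : Finset (Fin (n+3))) ∈ T.diags := by
  constructor
  · intro h
    obtain ⟨e, he, heq⟩ := Finset.mem_image.1 h
    have : e = ({a, b} : Finset (Fin (n+3))) := by
      have := congrArg unrotF heq
      rw [unrotF_rotF, unrotF_pair] at this
      simpa using this
    rwa [← this]
  · intro h
    exact Finset.mem_image.2 ⟨_, h, rotF_pair a b⟩

lemma isEdge_rot {T : Triangulation (n+3)} {a b : Fin (n+3)} :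
    IsEdge (rotT T) (a + 1) (b + 1) ↔ IsEdge T a b := by
  unfold IsEdge
  rw [bdryAdj_rot, mem_rot_diags]
  simp [add_left_inj]

lemma isTriangle_rot' {T : Triangulation (n+3)} {t : Finset (Fin (n+3))}
    (h : IsTriangle T t) : IsTriangle (rotT T) (rotF t) := by
  obtain ⟨a, b, c, hab, hac, hbc, rfl, e1, e2, e3⟩ := h
  exact ⟨a + 1, b + 1, c + 1, by simpa using hab, by simpa using hac, by simpa using hbc,
    rotF_triple a b c, isEdge_rot.2 e1, isEdge_rot.2 e2, isEdge_rot.2 e3⟩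

lemma isTriangle_unrot {T : Triangulation (n+3)} {t : Finset (Fin (n+3))}
    (h : IsTriangle (rotT T) t) : IsTriangle T (unrotF t) := by
  obtain ⟨a, b, c, hab, hac, hbc, rfl, e1, e2, e3⟩ := h
  rw [unrotF_triple]
  refine ⟨a - 1, b - 1, c - 1, by simpa using hab, by simpa using hac, by simpa using hbc,
    rfl, ?_, ?_, ?_⟩ <;> rw [← isEdge_rot] <;> simpa

def rotC (C : ColouredTri (n+3) 2) : ColouredTri (n+3) 2 where
  T := rotT C.T
  col := fun t => C.col ⟨unrotF t.val, isTriangle_unrot t.prop⟩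

lemma col_congr (C : ColouredTri (n+3) 2) {t s : Finset (Fin (n+3))}
    {h : IsTriangle C.T t} {h' : IsTriangle C.T s} (e : t = s) :
    C.col ⟨t, h⟩ = C.col ⟨s, h'⟩ := by subst e; rfl

lemma rotC_col (C : ColouredTri (n+3) 2) {t : Finset (Fin (n+3))}
    (h : IsTriangle (rotT C.T) (rotF t)) (ht : IsTriangle C.T t) :
    (rotC C).col ⟨rotF t, h⟩ = C.col ⟨t, ht⟩ := by
  show C.col _ = C.col _
  exact col_congr C (unrotF_rotF t)

lemma degree_rot (T : Triangulation (n+3)) (x : Fin (n+3)) :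
    degree (rotT T) (x + 1) = degree T x := by
  unfold degree
  apply Nat.card_congr
  refine ⟨fun y => ⟨y.val - 1, ?_⟩, fun y => ⟨y.val + 1, isEdge_rot.2 y.prop⟩, ?_, ?_⟩
  · rw [← isEdge_rot (T := T)]
    have : y.val - 1 + 1 = y.val := by simp
    rw [this]
    exact y.prop
  · intro y; apply Subtype.ext; simp
  · intro y; apply Subtype.ext; simp

lemma weight_rot (C : ColouredTri (n+3) 2) (x : Fin (n+3)) :
    weight (rotC C) (x + 1) = weight C x := by
  unfold weight
  symm
  apply finsum_eq_of_bijective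
    (fun t : {t : Finset (Fin (n+3)) // IsTriangle C.T t} =>
      (⟨rotF t.val, isTriangle_rot' t.prop⟩ : {t : Finset (Fin (n+3)) // IsTriangle (rotC C).T t}))
  · constructor
    · intro s t hst
      apply Subtype.ext
      have := congrArg (fun z : {t : Finset (Fin (n+3)) // IsTriangle (rotC C).T t} => unrotF z.val) hst
      simpa [unrotF_rotF] using this
    · intro t
      refine ⟨⟨unrotF t.val, ?_⟩, Subtype.ext (rotF_unrotF t.val)⟩
      exact isTriangle_unrot t.prop
  · intro t
    simp only [mem_rotF]
    by_cases hx : x ∈ t.val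
    · rw [if_pos hx, if_pos hx, rotC_col C _ t.prop]
    · rw [if_neg hx, if_neg hx]

end Rotation

section Weight

variable {n : ℕ}

attribute [local instance] Classical.propDecidable

noncomputable def colx (C : ColouredTri (n+3) 2) (t : Finset (Fin (n+3))) : Fin 2 :=
  if h : IsTriangle C.T t then C.col ⟨t, h⟩ else 0

lemma colx_eq (C : ColouredTri (n+3) 2) {t : Finset (Fin (n+3))} (h : IsTriangle C.T t) :
    colx C t = C.col ⟨t, h⟩ := by
  unfold colx
  rw [dif_pos h]

lemma signVal_add_ne {c1 c2 : Fin 2} (h : c1 ≠ c2) : signVal c1 + signVal c2 = 0 := by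
  fin_cases c1 <;> fin_cases c2 <;> first | exact absurd rfl h | decide

lemma signVal_triple (c : Fin 2) : signVal c + signVal c + signVal c = 0 := by
  fin_cases c <;> decide

lemma weight_eq_sum (C : ColouredTri (n+3) 2) (x : Fin (n+3)) :
    weight C x = ∑ t ∈ Finset.univ.filter
      (fun t => IsTriangle C.T t ∧ x ∈ t), signVal (colx C t) := by
  unfold weight
  rw [finsum_eq_sum_of_fintype]
  have h1 : ∀ t : {t : Finset (Fin (n+3)) // IsTriangle C.T t},
      (if x ∈ t.val then signVal (C.col t) else 0) =
      (if IsTriangle C.T t.val ∧ x ∈ t.val then signVal (colx C t.val) else 0) := by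
    intro t
    by_cases hx : x ∈ t.val
    · simp [hx, t.prop, colx_eq C t.prop]
    · simp [hx]
  rw [Finset.sum_congr rfl (fun t _ => h1 t)]
  rw [← Finset.sum_subtype (Finset.univ.filter (fun t => IsTriangle C.T t)) (by simp)
    (fun s => if IsTriangle C.T s ∧ x ∈ s then signVal (colx C s) else 0)]
  rw [Finset.sum_filter, Finset.sum_filter]
  apply Finset.sum_congr rfl
  intro t _
  by_cases hP : IsTriangle C.T t <;> by_cases hQ : x ∈ t <;> simp [hP, hQ]

end Weight

section Transfer

variable {n : ℕ}

lemma compatible_rot {C : ColouredTri (n+3) 2} {col : Fin (n+3) → Fin 4}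
    (h : Compatible C col) : Compatible (rotC C) (fun i => col (i - 1)) := by
  constructor
  · intro a b hab
    have : IsEdge C.T (a - 1) (b - 1) := by
      rw [← isEdge_rot (T := C.T)]
      rw [sub_add_cancel, sub_add_cancel]; exact hab
    exact h.1 _ _ this
  · intro a b x z h₁ h₂ hxz hd
    have e1 : IsTriangle C.T {a - 1, b - 1, x - 1} := by
      have := isTriangle_unrot h₁
      rwa [unrotF_triple] at this
    have e2 : IsTriangle C.T {a - 1, b - 1, z - 1} := by
      have := isTriangle_unrot h₂
      rwa [unrotF_triple] at this
    have hd' : ({a - 1, b - 1} : Finset (Fin (n+3))) ∈ C.T.diags := by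
      rw [← mem_rot_diags (T := C.T)]
      rw [sub_add_cancel, sub_add_cancel]; exact hd
    have hmain := h.2 (a-1) (b-1) (x-1) (z-1) e1 e2 (by simpa using hxz) hd'
    have c1 : (rotC C).col ⟨{a, b, x}, h₁⟩ = C.col ⟨{a-1, b-1, x-1}, e1⟩ := by
      show C.col _ = _
      exact col_congr C (by rw [unrotF_triple])
    have c2 : (rotC C).col ⟨{a, b, z}, h₂⟩ = C.col ⟨{a-1, b-1, z-1}, e2⟩ := by
      show C.col _ = _
      exact col_congr C (by rw [unrotF_triple])
    rw [c1, c2]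
    simpa using hmain

lemma pair_map_rot {y z w1 w2 : Fin (n+3)} (h : ({y, z} : Finset (Fin (n+3))) = {w1, w2}) :
    ({y + 1, z + 1} : Finset (Fin (n+3))) = {w1 + 1, w2 + 1} := by
  rcases pair_eq_iff.1 h with ⟨rfl, rfl⟩ | ⟨rfl, rfl⟩
  · rfl
  · exact Finset.pair_comm _ _

set_option maxHeartbeats 2000000 in
lemma main_zero (C : ColouredTri (n+3) 2) (col : Fin (n+3) → Fin 4)
    (hcomp : Compatible C col) (hbd : col (0 - 1) = col (0 + 1))
    (honly : ∀ y z : Fin (n+3), y ≠ z → IsEdge C.T 0 y → IsEdge C.T 0 z →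
      col y = col z → ({y, z} : Finset (Fin (n+3))) = {0 - 1, 0 + 1}) :
    (degree C.T 0 = 3 ∨ degree C.T 0 = 4) ∧ weight C 0 = 0 := by
  classical
  set μ : Fin (n+3) := 0 - 1 with hμdef
  have hsum : μ + 1 = 0 := by rw [hμdef]; exact sub_add_cancel 0 1
  have hvsum : (μ.val + 1) % (n+3) = 0 := by
    have := congrArg Fin.val hsum
    rwa [Fin.val_add, Fin.val_one, Fin.val_zero] at this
  have hμval : μ.val = n + 2 := by
    have h1 := μ.isLt
    rcases Nat.lt_or_ge (μ.val + 1) (n+3) with h | h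
    · rw [Nat.mod_eq_of_lt h] at hvsum; omega
    · omega
  have hval1 : (1 : Fin (n+3)).val = 1 := by
    rw [Fin.val_one]
  have hbd1 : col μ = col 1 := by simpa using hbd
  have hprop := hcomp.1
  have honly' : ∀ y z : Fin (n+3), y ≠ z → IsEdge C.T 0 y → IsEdge C.T 0 z →
      col y = col z → ({y, z} : Finset (Fin (n+3))) = {μ, 1} := by
    intro y z h1 h2 h3 h4
    have := honly y z h1 h2 h3 h4
    simpa using this
  have h1ne0 : (1 : Fin (n+3)) ≠ 0 := by
    intro h
    have := congrArg Fin.val h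
    rw [hval1, Fin.val_zero] at this
    omega
  have hμne0 : μ ≠ 0 := by
    intro h
    have := congrArg Fin.val h
    rw [hμval, Fin.val_zero] at this
    omega
  have h1neμ : (1 : Fin (n+3)) ≠ μ := by
    intro h
    have := congrArg Fin.val h
    rw [hμval, hval1] at this
    omega
  have hedge01 : IsEdge C.T 0 1 := by
    refine ⟨h1ne0.symm, Or.inl (Or.inl ?_)⟩
    show ((0 : Fin (n+3)).val + 1) % (n+3) = (1 : Fin (n+3)).val
    rw [Fin.val_zero, hval1]
    exact Nat.mod_eq_of_lt (by omega)
  have hedge0μ : IsEdge C.T 0 μ := by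
    refine ⟨hμne0.symm, Or.inl (Or.inr ?_)⟩
    show (μ.val + 1) % (n+3) = (0 : Fin (n+3)).val
    rw [Fin.val_zero, hμval]
    have h32 : n + 2 + 1 = n + 3 := by omega
    rw [h32, Nat.mod_self]
  set S : Finset (Fin (n+3)) := Finset.univ.filter (fun y => IsEdge C.T 0 y) with hSdef
  have hmemS : ∀ y, y ∈ S ↔ IsEdge C.T 0 y := by
    intro y
    simp [hSdef]
  have h1S : (1 : Fin (n+3)) ∈ S := (hmemS 1).2 hedge01
  have hμS : μ ∈ S := (hmemS μ).2 hedge0μ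
  have hC1 : ∀ a b s : Fin (n+3), IsEdge C.T 0 a → IsEdge C.T 0 s → IsEdge C.T a b →
      a < s → s < b → False := by
    intro a b s ha hs hab has hsb
    have ha0 : (0 : Fin (n+3)) < a := Fin.pos_of_ne_zero (Ne.symm ha.1)
    exact not_cross_edge hs hab ⟨0, s, a, b, rfl, rfl, ha0, has, hsb⟩
  have hC2 : ∀ v : Fin (n+3), IsEdge C.T 0 v → 2 ≤ v.val →
      ∃ c, c < v ∧ IsEdge C.T 0 c ∧ IsEdge C.T c v := by
    intro v hv h2
    obtain ⟨c, _, h2', h3, h4⟩ := fan hv (by rw [Fin.val_zero]; omega)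
    exact ⟨c, h2', h3, h4⟩
  have hdeg : degree C.T 0 = S.card := by
    unfold degree
    rw [Nat.card_eq_fintype_card, Fintype.card_subtype]
  have hcard_le : S.card ≤ 4 := by
    have hmaps : ∀ y ∈ S.erase μ, col y ∈ (Finset.univ : Finset (Fin 4)).erase (col 0) := by
      intro y hy
      have hyS := Finset.mem_of_mem_erase hy
      have hne := hprop 0 y ((hmemS y).1 hyS)
      exact Finset.mem_erase.2 ⟨fun h => hne h.symm, Finset.mem_univ _⟩
    have hinj : Set.InjOn col ↑(S.erase μ) := by
      intro y hy z hz hcol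
      by_contra hne
      have hy' : y ∈ S.erase μ := by exact_mod_cast hy
      have hz' : z ∈ S.erase μ := by exact_mod_cast hz
      have hyS := Finset.mem_of_mem_erase hy'
      have hzS := Finset.mem_of_mem_erase hz'
      have hp := honly' y z hne ((hmemS y).1 hyS) ((hmemS z).1 hzS) hcol
      rcases pair_eq_iff.1 hp with ⟨h1, _⟩ | ⟨_, h2⟩
      · exact (Finset.mem_erase.1 hy').1 h1
      · exact (Finset.mem_erase.1 hz').1 h2
    have h3 : (S.erase μ).card ≤ 3 := by
      have := Finset.card_le_card_of_injOn col hmaps hinj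
      rwa [Finset.card_erase_of_mem (Finset.mem_univ _), Finset.card_univ,
        Fintype.card_fin] at this
    have h4 : (S.erase μ).card + 1 = S.card := Finset.card_erase_add_one hμS
    omega
  have hcard_ge : 3 ≤ S.card := by
    by_contra hlt
    push_neg at hlt
    have hsub : ({1, μ} : Finset (Fin (n+3))) ⊆ S := by
      intro t ht
      simp only [Finset.mem_insert, Finset.mem_singleton] at ht
      rcases ht with rfl | rfl
      · exact h1S
      · exact hμS
    have hc2 : ({1, μ} : Finset (Fin (n+3))).card = 2 := by
      rw [Finset.card_insert_of_notMem (by simp [h1neμ]), Finset.card_singleton]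
    have hSeq : ({1, μ} : Finset (Fin (n+3))) = S :=
      Finset.eq_of_subset_of_card_le hsub (by omega)
    obtain ⟨c, hcμ, hc0, hce⟩ := hC2 μ hedge0μ (by rw [hμval]; omega)
    have hcS : c ∈ S := (hmemS c).2 hc0
    rw [← hSeq] at hcS
    simp only [Finset.mem_insert, Finset.mem_singleton] at hcS
    rcases hcS with rfl | rfl
    · exact hprop 1 μ hce hbd1.symm
    · exact absurd hcμ (lt_irrefl _)
  have htri0 : ∀ t, IsTriangle C.T t → (0 : Fin (n+3)) ∈ t →
      ∃ p q, p < q ∧ IsEdge C.T 0 p ∧ IsEdge C.T 0 q ∧ IsEdge C.T p q ∧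
        t = {0, p, q} := by
    intro t ht h0
    obtain ⟨a, b, c, hab, hac, hbc, rfl, e1, e2, e3⟩ := ht
    have mk : ∀ p q : Fin (n+3), IsEdge C.T 0 p → IsEdge C.T 0 q → IsEdge C.T p q →
        ∃ p' q', p' < q' ∧ IsEdge C.T 0 p' ∧ IsEdge C.T 0 q' ∧ IsEdge C.T p' q' ∧
          ({0, p, q} : Finset (Fin (n+3))) = {0, p', q'} := by
      intro p q hp hq hpq
      rcases lt_trichotomy p q with h | h | h
      · exact ⟨p, q, h, hp, hq, hpq, rfl⟩
      · exact absurd h hpq.1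
      · exact ⟨q, p, h, hq, hp, isEdge_symm hpq, by ext w; simp; tauto⟩
    simp only [Finset.mem_insert, Finset.mem_singleton] at h0
    rcases h0 with h0 | h0 | h0
    · subst h0
      exact mk b c e1 e2 e3
    · subst h0
      obtain ⟨p', q', h1, h2, h3, h4, h5⟩ := mk a c (isEdge_symm e1) e3 e2
      exact ⟨p', q', h1, h2, h3, h4, by rw [← h5]; ext w; simp; tauto⟩
    · subst h0
      obtain ⟨p', q', h1, h2, h3, h4, h5⟩ := mk a b (isEdge_symm e2) (isEdge_symm e3) e1
      exact ⟨p', q', h1, h2, h3, h4, by rw [← h5]; ext w; simp; tauto⟩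
  have hdiag : ∀ y : Fin (n+3), IsEdge C.T 0 y → 2 ≤ y.val → y.val ≤ n + 1 →
      ({0, y} : Finset (Fin (n+3))) ∈ C.T.diags := by
    intro y hy h2 h3
    rcases hy.2 with hb | hm
    · have h0y : (0 : Fin (n+3)) < y := Fin.pos_of_ne_zero (Ne.symm hy.1)
      rcases bdryAdj_lt h0y hb with h' | ⟨_, h'⟩ <;> rw [Fin.val_zero] at * <;> omega
    · exact hm
  have hc34 : S.card = 3 ∨ S.card = 4 := by omega
  rcases hc34 with h3 | h4
  · -- degree 3 case
    have hyone : ∃ y, (S.erase μ).erase 1 = {y} := by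
      apply Finset.card_eq_one.1
      have e1 : (S.erase μ).card + 1 = 3 := by rw [Finset.card_erase_add_one hμS, h3]
      have h1' : (1 : Fin (n+3)) ∈ S.erase μ := Finset.mem_erase.2 ⟨h1neμ, h1S⟩
      have e2 : ((S.erase μ).erase 1).card + 1 = (S.erase μ).card :=
        Finset.card_erase_add_one h1'
      omega
    obtain ⟨y, hy⟩ := hyone
    have hyy : y ∈ (S.erase μ).erase 1 := by rw [hy]; simp
    have hy1 : y ≠ 1 := (Finset.mem_erase.1 hyy).1
    have hyμ : y ≠ μ := (Finset.mem_erase.1 (Finset.mem_erase.1 hyy).2).1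
    have hyS : y ∈ S := Finset.mem_of_mem_erase (Finset.mem_of_mem_erase hyy)
    have hedge0y : IsEdge C.T 0 y := (hmemS y).1 hyS
    have hSeq : S = {1, y, μ} := by
      ext z
      simp only [Finset.mem_insert, Finset.mem_singleton]
      constructor
      · intro hz
        by_cases hz1 : z = 1
        · exact Or.inl hz1
        by_cases hzμ : z = μ
        · exact Or.inr (Or.inr hzμ)
        have : z ∈ (S.erase μ).erase 1 :=
          Finset.mem_erase.2 ⟨hz1, Finset.mem_erase.2 ⟨hzμ, hz⟩⟩
        rw [hy] at this
        simp only [Finset.mem_singleton] at this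
        exact Or.inr (Or.inl this)
      · rintro (rfl | rfl | rfl)
        exacts [h1S, hyS, hμS]
    have hyv2 : 2 ≤ y.val := by
      have h0 : y.val ≠ 0 := fun h => hedge0y.1 (Fin.ext (by rw [Fin.val_zero, h])).symm
      have h1 : y.val ≠ 1 := fun h => hy1 (Fin.ext (by rw [h, hval1]))
      omega
    have hyvle : y.val ≤ n + 1 := by
      have := y.isLt
      have hne : y.val ≠ n + 2 := fun h => hyμ (Fin.ext (by rw [h, hμval]))
      omega
    have h1y : (1 : Fin (n+3)) < y := by rw [Fin.lt_def, hval1]; omega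
    have hyμlt : y < μ := by rw [Fin.lt_def, hμval]; omega
    have hedge1y : IsEdge C.T 1 y := by
      obtain ⟨c, hcy, hc0, hce⟩ := hC2 y hedge0y hyv2
      have hcS : c ∈ S := (hmemS c).2 hc0
      rw [hSeq] at hcS
      simp only [Finset.mem_insert, Finset.mem_singleton] at hcS
      rcases hcS with rfl | rfl | rfl
      · exact hce
      · exact absurd hcy (lt_irrefl _)
      · exact absurd (hcy.trans hyμlt) (lt_irrefl _)
    have hedgeyμ : IsEdge C.T y μ := by
      obtain ⟨c, hcμ, hc0, hce⟩ := hC2 μ hedge0μ (by rw [hμval]; omega)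
      have hcS : c ∈ S := (hmemS c).2 hc0
      rw [hSeq] at hcS
      simp only [Finset.mem_insert, Finset.mem_singleton] at hcS
      rcases hcS with rfl | rfl | rfl
      · exact absurd hbd1.symm (hprop 1 μ hce)
      · exact hce
      · exact absurd hcμ (lt_irrefl _)
    have htriA : IsTriangle C.T {0, 1, y} :=
      ⟨0, 1, y, h1ne0.symm, hedge0y.1, Ne.symm hy1, rfl, hedge01, hedge0y, hedge1y⟩
    have htriB : IsTriangle C.T {0, y, μ} :=
      ⟨0, y, μ, hedge0y.1, hedge0μ.1, hyμ, rfl, hedge0y, hedge0μ, hedgeyμ⟩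
    have hW : Finset.univ.filter (fun t => IsTriangle C.T t ∧ (0 : Fin (n+3)) ∈ t) =
        {({0, 1, y} : Finset (Fin (n+3))), {0, y, μ}} := by
      ext t
      simp only [Finset.mem_filter, Finset.mem_univ, true_and, Finset.mem_insert,
        Finset.mem_singleton]
      constructor
      · rintro ⟨ht, h0t⟩
        obtain ⟨p, q, hpq, hp, hq, hpqe, rfl⟩ := htri0 t ht h0t
        have hpS : p ∈ S := (hmemS p).2 hp
        have hqS : q ∈ S := (hmemS q).2 hq
        rw [hSeq] at hpS hqS
        simp only [Finset.mem_insert, Finset.mem_singleton] at hpS hqS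
        rcases hpS with rfl | rfl | rfl <;> rcases hqS with rfl | rfl | rfl
        · exact absurd hpq (lt_irrefl _)
        · exact Or.inl rfl
        · exact (hC1 _ _ _ hedge01 hedge0y hpqe h1y hyμlt).elim
        · exact absurd hpq (not_lt.2 h1y.le)
        · exact absurd hpq (lt_irrefl _)
        · exact Or.inr rfl
        · exact absurd hpq (not_lt.2 (h1y.trans hyμlt).le)
        · exact absurd hpq (not_lt.2 hyμlt.le)
        · exact absurd hpq (lt_irrefl _)
      · rintro (rfl | rfl)
        · exact ⟨htriA, by simp⟩
        · exact ⟨htriB, by simp⟩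
    have hne12 : ({0, 1, y} : Finset (Fin (n+3))) ≠ {0, y, μ} := by
      intro h
      have h1mem : (1 : Fin (n+3)) ∈ ({0, y, μ} : Finset (Fin (n+3))) := by
        rw [← h]; simp
      simp only [Finset.mem_insert, Finset.mem_singleton] at h1mem
      rcases h1mem with h' | h' | h'
      · exact h1ne0 h'
      · exact hy1 h'.symm
      · exact h1neμ h'
    have hdiag0y : ({0, y} : Finset (Fin (n+3))) ∈ C.T.diags := hdiag y hedge0y hyv2 hyvle
    have htriA' : IsTriangle C.T {0, y, 1} :=
      ⟨0, y, 1, hedge0y.1, h1ne0.symm, hy1, rfl, hedge0y, hedge01, isEdge_symm hedge1y⟩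
    have hq := hcomp.2 0 y 1 μ htriA' htriB h1neμ hdiag0y
    have hcolne : C.col ⟨{0, y, 1}, htriA'⟩ ≠ C.col ⟨{0, y, μ}, htriB⟩ := hq.1 hbd1.symm
    have e1 : colx C {0, 1, y} = C.col ⟨{0, y, 1}, htriA'⟩ := by
      rw [colx_eq C htriA]
      exact col_congr C (by ext w; simp; tauto)
    have e2 : colx C {0, y, μ} = C.col ⟨{0, y, μ}, htriB⟩ := colx_eq C htriB
    refine ⟨Or.inl (by rw [hdeg, h3]), ?_⟩
    rw [weight_eq_sum, hW, Finset.sum_pair hne12, e1, e2]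
    exact signVal_add_ne hcolne
  · -- degree 4 case
    have hyz2 : ∃ y z : Fin (n+3), y < z ∧ (S.erase μ).erase 1 = {y, z} := by
      have h1' : (1 : Fin (n+3)) ∈ S.erase μ := Finset.mem_erase.2 ⟨h1neμ, h1S⟩
      have e1 : (S.erase μ).card + 1 = 4 := by rw [Finset.card_erase_add_one hμS, h4]
      have e2 : ((S.erase μ).erase 1).card + 1 = (S.erase μ).card :=
        Finset.card_erase_add_one h1'
      obtain ⟨y, z, hyz, hset⟩ := Finset.card_eq_two.1 (by omega : ((S.erase μ).erase 1).card = 2)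
      rcases lt_trichotomy y z with h | h | h
      · exact ⟨y, z, h, hset⟩
      · exact absurd h hyz
      · exact ⟨z, y, h, by rw [hset]; exact Finset.pair_comm y z⟩
    obtain ⟨y, z, hyzlt, hyzset⟩ := hyz2
    have hyy : y ∈ (S.erase μ).erase 1 := by rw [hyzset]; simp
    have hzz : z ∈ (S.erase μ).erase 1 := by rw [hyzset]; simp
    have hy1 : y ≠ 1 := (Finset.mem_erase.1 hyy).1
    have hyμ : y ≠ μ := (Finset.mem_erase.1 (Finset.mem_erase.1 hyy).2).1
    have hyS : y ∈ S := Finset.mem_of_mem_erase (Finset.mem_of_mem_erase hyy)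
    have hz1 : z ≠ 1 := (Finset.mem_erase.1 hzz).1
    have hzμ : z ≠ μ := (Finset.mem_erase.1 (Finset.mem_erase.1 hzz).2).1
    have hzS : z ∈ S := Finset.mem_of_mem_erase (Finset.mem_of_mem_erase hzz)
    have hedge0y : IsEdge C.T 0 y := (hmemS y).1 hyS
    have hedge0z : IsEdge C.T 0 z := (hmemS z).1 hzS
    have hSeq : S = {1, y, z, μ} := by
      ext w
      simp only [Finset.mem_insert, Finset.mem_singleton]
      constructor
      · intro hw
        by_cases hw1 : w = 1
        · exact Or.inl hw1
        by_cases hwμ : w = μ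
        · exact Or.inr (Or.inr (Or.inr hwμ))
        have : w ∈ (S.erase μ).erase 1 :=
          Finset.mem_erase.2 ⟨hw1, Finset.mem_erase.2 ⟨hwμ, hw⟩⟩
        rw [hyzset] at this
        simp only [Finset.mem_insert, Finset.mem_singleton] at this
        rcases this with h | h
        · exact Or.inr (Or.inl h)
        · exact Or.inr (Or.inr (Or.inl h))
      · rintro (rfl | rfl | rfl | rfl)
        exacts [h1S, hyS, hzS, hμS]
    have hyv2 : 2 ≤ y.val := by
      have h0 : y.val ≠ 0 := fun h => hedge0y.1 (Fin.ext (by rw [Fin.val_zero, h])).symm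
      have h1 : y.val ≠ 1 := fun h => hy1 (Fin.ext (by rw [h, hval1]))
      omega
    have hzv2 : 2 ≤ z.val := by
      have : y.val < z.val := hyzlt
      omega
    have hzvle : z.val ≤ n + 1 := by
      have := z.isLt
      have hne : z.val ≠ n + 2 := fun h => hzμ (Fin.ext (by rw [h, hμval]))
      omega
    have hyvle : y.val ≤ n + 1 := by
      have : y.val < z.val := hyzlt
      omega
    have h1y : (1 : Fin (n+3)) < y := by rw [Fin.lt_def, hval1]; omega
    have h1z : (1 : Fin (n+3)) < z := by rw [Fin.lt_def, hval1]; omega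
    have hyμlt : y < μ := by
      rw [Fin.lt_def, hμval]
      have : y.val < z.val := hyzlt
      omega
    have hzμlt : z < μ := by rw [Fin.lt_def, hμval]; omega
    have hedge1y : IsEdge C.T 1 y := by
      obtain ⟨c, hcy, hc0, hce⟩ := hC2 y hedge0y hyv2
      have hcS : c ∈ S := (hmemS c).2 hc0
      rw [hSeq] at hcS
      simp only [Finset.mem_insert, Finset.mem_singleton] at hcS
      rcases hcS with rfl | rfl | rfl | rfl
      · exact hce
      · exact absurd hcy (lt_irrefl _)
      · exact absurd (hyzlt.trans hcy) (lt_irrefl _)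
      · exact absurd (hcy.trans hyμlt) (lt_irrefl _)
    have hedgeyz : IsEdge C.T y z := by
      obtain ⟨c, hcz, hc0, hce⟩ := hC2 z hedge0z hzv2
      have hcS : c ∈ S := (hmemS c).2 hc0
      rw [hSeq] at hcS
      simp only [Finset.mem_insert, Finset.mem_singleton] at hcS
      rcases hcS with rfl | rfl | rfl | rfl
      · exact (hC1 _ _ _ hedge01 hedge0y hce h1y hyzlt).elim
      · exact hce
      · exact absurd hcz (lt_irrefl _)
      · exact absurd (hcz.trans hzμlt) (lt_irrefl _)
    have hedgezμ : IsEdge C.T z μ := by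
      obtain ⟨c, hcμ, hc0, hce⟩ := hC2 μ hedge0μ (by rw [hμval]; omega)
      have hcS : c ∈ S := (hmemS c).2 hc0
      rw [hSeq] at hcS
      simp only [Finset.mem_insert, Finset.mem_singleton] at hcS
      rcases hcS with rfl | rfl | rfl | rfl
      · exact (hC1 _ _ _ hedge01 hedge0y hce h1y hyμlt).elim
      · exact (hC1 _ _ _ hedge0y hedge0z hce hyzlt hzμlt).elim
      · exact hce
      · exact absurd hcμ (lt_irrefl _)
    have htriA : IsTriangle C.T {0, 1, y} :=
      ⟨0, 1, y, h1ne0.symm, hedge0y.1, Ne.symm hy1, rfl, hedge01, hedge0y, hedge1y⟩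
    have htriB : IsTriangle C.T {0, y, z} :=
      ⟨0, y, z, hedge0y.1, hedge0z.1, ne_of_lt hyzlt, rfl, hedge0y, hedge0z, hedgeyz⟩
    have htriD : IsTriangle C.T {0, z, μ} :=
      ⟨0, z, μ, hedge0z.1, hedge0μ.1, hzμ, rfl, hedge0z, hedge0μ, hedgezμ⟩
    have hW : Finset.univ.filter (fun t => IsTriangle C.T t ∧ (0 : Fin (n+3)) ∈ t) =
        {({0, 1, y} : Finset (Fin (n+3))), {0, y, z}, {0, z, μ}} := by
      ext t
      simp only [Finset.mem_filter, Finset.mem_univ, true_and, Finset.mem_insert,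
        Finset.mem_singleton]
      constructor
      · rintro ⟨ht, h0t⟩
        obtain ⟨p, q, hpq, hp, hq, hpqe, rfl⟩ := htri0 t ht h0t
        have hpS : p ∈ S := (hmemS p).2 hp
        have hqS : q ∈ S := (hmemS q).2 hq
        rw [hSeq] at hpS hqS
        simp only [Finset.mem_insert, Finset.mem_singleton] at hpS hqS
        rcases hpS with rfl | rfl | rfl | rfl <;> rcases hqS with rfl | rfl | rfl | rfl
        · exact absurd hpq (lt_irrefl _)
        · exact Or.inl rfl
        · exact (hC1 _ _ _ hedge01 hedge0y hpqe h1y hyzlt).elim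
        · exact (hC1 _ _ _ hedge01 hedge0y hpqe h1y hyμlt).elim
        · exact absurd hpq (not_lt.2 h1y.le)
        · exact absurd hpq (lt_irrefl _)
        · exact Or.inr (Or.inl rfl)
        · exact (hC1 _ _ _ hedge0y hedge0z hpqe hyzlt hzμlt).elim
        · exact absurd hpq (not_lt.2 h1z.le)
        · exact absurd hpq (not_lt.2 hyzlt.le)
        · exact absurd hpq (lt_irrefl _)
        · exact Or.inr (Or.inr rfl)
        · exact absurd hpq (not_lt.2 (h1y.trans hyμlt).le)
        · exact absurd hpq (not_lt.2 hyμlt.le)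
        · exact absurd hpq (not_lt.2 hzμlt.le)
        · exact absurd hpq (lt_irrefl _)
      · rintro (rfl | rfl | rfl)
        · exact ⟨htriA, by simp⟩
        · exact ⟨htriB, by simp⟩
        · exact ⟨htriD, by simp⟩
    have hneAB : ({0, 1, y} : Finset (Fin (n+3))) ≠ {0, y, z} := by
      intro h
      have h1mem : (1 : Fin (n+3)) ∈ ({0, y, z} : Finset (Fin (n+3))) := by rw [← h]; simp
      simp only [Finset.mem_insert, Finset.mem_singleton] at h1mem
      rcases h1mem with h' | h' | h'
      · exact h1ne0 h'
      · exact hy1 h'.symm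
      · exact hz1 h'.symm
    have hneAD : ({0, 1, y} : Finset (Fin (n+3))) ≠ {0, z, μ} := by
      intro h
      have h1mem : (1 : Fin (n+3)) ∈ ({0, z, μ} : Finset (Fin (n+3))) := by rw [← h]; simp
      simp only [Finset.mem_insert, Finset.mem_singleton] at h1mem
      rcases h1mem with h' | h' | h'
      · exact h1ne0 h'
      · exact hz1 h'.symm
      · exact h1neμ h'
    have hneBD : ({0, y, z} : Finset (Fin (n+3))) ≠ {0, z, μ} := by
      intro h
      have hymem : y ∈ ({0, z, μ} : Finset (Fin (n+3))) := by rw [← h]; simp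
      simp only [Finset.mem_insert, Finset.mem_singleton] at hymem
      rcases hymem with h' | h' | h'
      · exact hedge0y.1 h'.symm
      · exact absurd (h' ▸ hyzlt) (lt_irrefl _)
      · exact hyμ h'
    have hdiag0y : ({0, y} : Finset (Fin (n+3))) ∈ C.T.diags := hdiag y hedge0y hyv2 hyvle
    have hdiag0z : ({0, z} : Finset (Fin (n+3))) ∈ C.T.diags := hdiag z hedge0z hzv2 hzvle
    have htriA' : IsTriangle C.T {0, y, 1} :=
      ⟨0, y, 1, hedge0y.1, h1ne0.symm, hy1, rfl, hedge0y, hedge01, isEdge_symm hedge1y⟩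
    have htriB' : IsTriangle C.T {0, z, y} :=
      ⟨0, z, y, hedge0z.1, hedge0y.1, (ne_of_lt hyzlt).symm, rfl, hedge0z, hedge0y,
        isEdge_symm hedgeyz⟩
    -- first quadrilateral: diagonal {0, y}, opposite vertices 1 and z
    have h1nez : (1 : Fin (n+3)) ≠ z := ne_of_lt h1z
    have hq1 := hcomp.2 0 y 1 z htriA' htriB h1nez hdiag0y
    have hcol1z : col 1 ≠ col z := by
      intro heq
      have hp := honly' 1 z h1nez hedge01 hedge0z heq
      rcases pair_eq_iff.1 hp with ⟨hh1, _⟩ | ⟨_, hh2⟩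
      · exact h1neμ hh1
      · exact hzμ hh2
    have hcAB : C.col ⟨{0, y, 1}, htriA'⟩ = C.col ⟨{0, y, z}, htriB⟩ := by
      by_contra hne
      exact hcol1z (hq1.2 hne)
    -- second quadrilateral: diagonal {0, z}, opposite vertices y and μ
    have hq2 := hcomp.2 0 z y μ htriB' htriD hyμ hdiag0z
    have hcolyμ : col y ≠ col μ := by
      intro heq
      have hp := honly' y μ hyμ hedge0y hedge0μ heq
      rcases pair_eq_iff.1 hp with ⟨hh1, _⟩ | ⟨hh1, _⟩
      · exact hyμ hh1
      · exact hy1 hh1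
    have hcBD : C.col ⟨{0, z, y}, htriB'⟩ = C.col ⟨{0, z, μ}, htriD⟩ := by
      by_contra hne
      exact hcolyμ (hq2.2 hne)
    have eA : colx C {0, 1, y} = C.col ⟨{0, y, 1}, htriA'⟩ := by
      rw [colx_eq C htriA]
      exact col_congr C (by ext w; simp; tauto)
    have eB : colx C {0, y, z} = C.col ⟨{0, y, z}, htriB⟩ := colx_eq C htriB
    have eB' : colx C {0, y, z} = C.col ⟨{0, z, y}, htriB'⟩ := by
      rw [colx_eq C htriB]
      exact col_congr C (by ext w; simp; tauto)
    have eD : colx C {0, z, μ} = C.col ⟨{0, z, μ}, htriD⟩ := colx_eq C htriD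
    have hAeqB : colx C {0, 1, y} = colx C {0, y, z} := by rw [eA, eB, hcAB]
    have hBeqD : colx C {0, y, z} = colx C {0, z, μ} := by rw [eB', eD, hcBD]
    refine ⟨Or.inr (by rw [hdeg, h4]), ?_⟩
    rw [weight_eq_sum, hW]
    have hnotmem : ({0, 1, y} : Finset (Fin (n+3))) ∉
        ({({0, y, z} : Finset (Fin (n+3))), {0, z, μ}} : Finset (Finset (Fin (n+3)))) := by
      simp only [Finset.mem_insert, Finset.mem_singleton]
      push_neg
      exact ⟨hneAB, hneAD⟩
    rw [Finset.sum_insert hnotmem, Finset.sum_pair hneBD]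
    rw [hAeqB, hBeqD, ← add_assoc]
    exact signVal_triple _


lemma main_all : ∀ (k : ℕ) (C : ColouredTri (n+3) 2) (col : Fin (n+3) → Fin 4)
    (x : Fin (n+3)), ((n+3) - x.val) % (n+3) = k → Compatible C col →
    col (x - 1) = col (x + 1) →
    (∀ y z : Fin (n+3), y ≠ z → IsEdge C.T x y → IsEdge C.T x z → col y = col z →
      ({y, z} : Finset (Fin (n+3))) = {x - 1, x + 1}) →
    (degree C.T x = 3 ∨ degree C.T x = 4) ∧ weight C x = 0 := by
  intro k
  induction k with
  | zero =>
    intro C col x hx hcomp hbd honly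
    have hxlt := x.isLt
    have hv0 : x.val = 0 := by
      by_contra h0
      have h1 : n + 3 - x.val < n + 3 := by omega
      rw [Nat.mod_eq_of_lt h1] at hx
      omega
    have hx0 : x = 0 := Fin.ext hv0
    subst hx0
    exact main_zero C col hcomp hbd honly
  | succ k ih =>
    intro C col x hx hcomp hbd honly
    have hxlt := x.isLt
    have hx0 : x.val ≠ 0 := by
      intro h0
      have : x = 0 := Fin.ext (by simpa using h0)
      rw [this] at hx
      simp at hx
    have hv : (x + 1).val = (x.val + 1) % (n+3) := by rw [Fin.val_add, Fin.val_one]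
    have hk : n + 3 - x.val = k + 1 := by
      rwa [Nat.mod_eq_of_lt (by omega)] at hx
    have harith : ((n+3) - (x + 1).val) % (n+3) = k := by
      by_cases hxe : x.val = n + 2
      · have h1 : (x + 1).val = 0 := by rw [hv, hxe]; simp
        rw [h1]
        simp only [Nat.sub_zero, Nat.mod_self]
        omega
      · have h1 : (x + 1).val = x.val + 1 := by rw [hv]; exact Nat.mod_eq_of_lt (by omega)
        rw [h1, Nat.mod_eq_of_lt (by omega)]
        omega
    have hbd' : (fun i => col (i - 1)) ((x + 1) - 1) = (fun i => col (i - 1)) ((x + 1) + 1) := by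
      simp only
      have e1 : (x + 1) - 1 - 1 = x - 1 := by rw [add_sub_cancel_right]
      have e2 : (x + 1) + 1 - 1 = x + 1 := by rw [add_sub_cancel_right]
      rw [e1, e2]
      exact hbd
    have honly' : ∀ y z : Fin (n+3), y ≠ z → IsEdge (rotC C).T (x + 1) y →
        IsEdge (rotC C).T (x + 1) z → (fun i => col (i - 1)) y = (fun i => col (i - 1)) z →
        ({y, z} : Finset (Fin (n+3))) = {(x + 1) - 1, (x + 1) + 1} := by
      intro y z hyz hey hez hcol
      have hey' : IsEdge C.T x (y - 1) := by
        rw [← isEdge_rot (T := C.T)]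
        rw [sub_add_cancel]; exact hey
      have hez' : IsEdge C.T x (z - 1) := by
        rw [← isEdge_rot (T := C.T)]
        rw [sub_add_cancel]; exact hez
      have h := honly (y - 1) (z - 1) (by simpa using hyz) hey' hez' hcol
      have h2 := pair_map_rot h
      simpa using h2
    obtain ⟨hdeg, hw⟩ := ih (rotC C) (fun i => col (i - 1)) (x + 1) harith
      (compatible_rot hcomp) hbd' honly'
    have hdeg' : degree (rotC C).T (x + 1) = degree C.T x := degree_rot C.T x
    refine ⟨?_, ?_⟩
    · rwa [hdeg'] at hdeg
    · rwa [weight_rot] at hw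

end Transfer

/-- If the only two neighbours of `x` with equal colour (in the 4-colouring
associated to the signed triangulation) are its two neighbours along the boundary,
then `x` has degree 3 or 4 and its weight is `0`. -/
theorem degree_and_weight_of_boundary_same_colour (n : ℕ)
    (C : ColouredTri (n + 3) 2) (col : Fin (n + 3) → Fin 4)
    (hcomp : Compatible C col) (x : Fin (n + 3))
    (hbd : col (x - 1) = col (x + 1))
    (honly : ∀ y z : Fin (n + 3), y ≠ z → IsEdge C.T x y → IsEdge C.T x z →
      col y = col z → ({y, z} : Finset (Fin (n + 3))) = {x - 1, x + 1}) :
    (degree C.T x = 3 ∨ degree C.T x = 4) ∧ weight C x = 0 := by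
  exact main_all (((n+3) - x.val) % (n+3)) C col x rfl hcomp hbd honly

end PolyFlip
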